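/- Let k be a field complete with respect to an absolute value. The completion ℂ_k of an algebraic closure of k is algebraically closed. -/

import Mathlib

open Polynomial Filter Finset Topology

section Aux

variable {K : Type*} [NormedField K]

/-- A nonempty multiset has a minimum for any `ℝ≥0`-valued function. -/
lemma aux_multiset_exists_min {α : Type*} (f : α → NNReal) (s : Multiset α) (hs : s ≠ 0) :
    ∃ z ∈ s, ∀ w ∈ s, f z ≤ f w := by
  induction s using Multiset.induction_on with
  | empty => exact absurd rfl hs
  | cons a s ih =>
    rcases eq_or_ne s 0 with rfl | hne
    · refine ⟨a, Multiset.mem_cons_self _ _, ?_⟩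
      intro w hw
      rcases Multiset.mem_cons.1 hw with rfl | hw
      · exact le_rfl
      · simp at hw
    · obtain ⟨z, hz, hmin⟩ := ih hne
      rcases le_total (f a) (f z) with h | h
      · refine ⟨a, Multiset.mem_cons_self _ _, ?_⟩
        intro w hw
        rcases Multiset.mem_cons.1 hw with rfl | hw
        · exact le_rfl
        · exact h.trans (hmin w hw)
      · refine ⟨z, Multiset.mem_cons_of_mem hz, ?_⟩
        intro w hw
        rcases Multiset.mem_cons.1 hw with rfl | hw
        · exact h
        · exact hmin w hw

/-- Cauchy bound: a root of a monic polynomial is bounded in terms of the coefficients. -/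
lemma aux_norm_root_le {q : K[X]} (hm : q.Monic) {z : K} (hz : q.eval z = 0) :
    ‖z‖ ≤ max 1 (∑ i ∈ Finset.range q.natDegree, ‖q.coeff i‖) := by
  rcases le_or_gt ‖z‖ 1 with h | h
  · exact h.trans (le_max_left _ _)
  set n := q.natDegree with hn
  have hn0 : 0 < n := by
    rcases Nat.eq_zero_or_pos n with h0 | h0
    · rw [hm.natDegree_eq_zero.1 h0] at hz
      simp at hz
    · exact h0
  have he : q.eval z = ∑ i ∈ Finset.range (n + 1), q.coeff i * z ^ i :=
    eval_eq_sum_range' (Nat.lt_succ_of_le le_rfl) z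
  have h1 : z ^ n = -∑ i ∈ Finset.range n, q.coeff i * z ^ i := by
    have h' := he
    rw [hz, Finset.sum_range_succ, hm.coeff_natDegree, one_mul] at h'
    exact eq_neg_of_add_eq_zero_right h'.symm
  have h2 : ‖z‖ ^ n ≤ (∑ i ∈ Finset.range n, ‖q.coeff i‖) * ‖z‖ ^ (n - 1) := by
    calc ‖z‖ ^ n = ‖z ^ n‖ := (norm_pow _ _).symm
    _ = ‖∑ i ∈ Finset.range n, q.coeff i * z ^ i‖ := by rw [h1, norm_neg]
    _ ≤ ∑ i ∈ Finset.range n, ‖q.coeff i * z ^ i‖ := norm_sum_le _ _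
    _ = ∑ i ∈ Finset.range n, ‖q.coeff i‖ * ‖z‖ ^ i := by
        refine Finset.sum_congr rfl fun i _ => ?_
        rw [norm_mul, norm_pow]
    _ ≤ ∑ i ∈ Finset.range n, ‖q.coeff i‖ * ‖z‖ ^ (n - 1) := by
        refine Finset.sum_le_sum fun i hi => ?_
        have : i ≤ n - 1 := by
          have := Finset.mem_range.1 hi; omega
        exact mul_le_mul_of_nonneg_left (pow_le_pow_right₀ h.le this) (norm_nonneg _)
    _ = (∑ i ∈ Finset.range n, ‖q.coeff i‖) * ‖z‖ ^ (n - 1) := by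
        rw [Finset.sum_mul]
  have h3 : ‖z‖ ^ n = ‖z‖ ^ (n - 1) * ‖z‖ := by
    rw [← pow_succ]
    congr 1
    omega
  have hpos : 0 < ‖z‖ ^ (n - 1) := pow_pos (lt_trans one_pos h) _
  have : ‖z‖ ≤ ∑ i ∈ Finset.range n, ‖q.coeff i‖ := by
    rw [h3] at h2
    calc ‖z‖ = ‖z‖ ^ (n - 1) * ‖z‖ / ‖z‖ ^ (n - 1) := by field_simp
    _ ≤ (∑ i ∈ Finset.range n, ‖q.coeff i‖) * ‖z‖ ^ (n - 1) / ‖z‖ ^ (n - 1) := by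
        exact div_le_div_of_nonneg_right h2 hpos.le |>.trans_eq rfl
    _ = ∑ i ∈ Finset.range n, ‖q.coeff i‖ := by field_simp
  exact this.trans (le_max_right _ _)

/-- If a monic polynomial of positive degree splits, then for any point `x` there is a root
within distance `‖q.eval x‖ ^ (1/n)`. -/
lemma aux_exists_close_root {q : K[X]} (hm : q.Monic) (hs : q.Splits)
    (hd : 0 < q.natDegree) (x : K) :
    ∃ z ∈ q.roots, ‖x - z‖ ^ q.natDegree ≤ ‖q.eval x‖ := by
  have hcard : q.roots.card = q.natDegree := by
    have h := (hs.map (RingHom.id K)).natDegree_eq_card_roots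
    rw [Polynomial.map_id] at h
    exact h.symm
  have hne : q.roots ≠ 0 := by
    intro h0
    rw [h0] at hcard
    simp at hcard
    omega
  obtain ⟨z, hz, hmin⟩ := aux_multiset_exists_min (fun a => ‖x - a‖₊) q.roots hne
  refine ⟨z, hz, ?_⟩
  have hq : q = (q.roots.map fun a => X - C a).prod := hs.eq_prod_roots_of_monic hm
  have heval : q.eval x = (q.roots.map fun a => x - a).prod := by
    conv_lhs => rw [hq]
    rw [eval_multiset_prod, Multiset.map_map]
    congr 1
    apply Multiset.map_congr rfl
    intro a _
    simp
  have hnn : ‖q.eval x‖₊ = ((q.roots.map fun a => x - a).map nnnorm).prod := by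
    rw [heval, ← nnnormHom_apply, ← MonoidHom.coe_coe, MonoidHom.map_multiset_prod]
    rfl
  have hcard' : ((q.roots.map fun a => ‖x - a‖₊)).card = q.natDegree := by
    rw [Multiset.card_map, hcard]
  have key2 : ‖x - z‖₊ ^ q.natDegree ≤ (q.roots.map fun a => ‖x - a‖₊).prod := by
    rw [← hcard']
    apply Multiset.pow_card_le_prod
    intro y hy
    obtain ⟨a, ha, rfl⟩ := Multiset.mem_map.1 hy
    exact hmin a ha
  have key : ‖x - z‖₊ ^ q.natDegree ≤ ‖q.eval x‖₊ := by
    rw [hnn, Multiset.map_map]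
    exact key2
  calc ‖x - z‖ ^ q.natDegree = ((‖x - z‖₊ ^ q.natDegree : NNReal) : ℝ) := by
        rw [NNReal.coe_pow, coe_nnnorm]
  _ ≤ ((‖q.eval x‖₊ : NNReal) : ℝ) := NNReal.coe_le_coe.2 key
  _ = ‖q.eval x‖ := coe_nnnorm _

/-- Bound on the difference of evaluations of two polynomials of degree `≤ n` with the same
`n`-th coefficient, in terms of the distance between the coefficients. -/
lemma aux_eval_diff_bound {p q : K[X]} {n : ℕ} (hp : p.natDegree ≤ n) (hq : q.natDegree ≤ n)
    (hlead : q.coeff n = p.coeff n) {δ M : ℝ} (hδ : ∀ i, i < n → ‖q.coeff i - p.coeff i‖ ≤ δ)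
    (hM : 1 ≤ M) {x : K} (hx : ‖x‖ ≤ M) :
    ‖q.eval x - p.eval x‖ ≤ n * δ * M ^ n := by
  have hq' := eval_eq_sum_range' (Nat.lt_succ_of_le hq) x
  have hp' := eval_eq_sum_range' (Nat.lt_succ_of_le hp) x
  rw [hq', hp', ← Finset.sum_sub_distrib]
  have step : ∑ i ∈ Finset.range (n + 1), (q.coeff i * x ^ i - p.coeff i * x ^ i)
      = ∑ i ∈ Finset.range n, (q.coeff i - p.coeff i) * x ^ i := by
    rw [Finset.sum_range_succ, hlead, sub_self, add_zero]
    exact Finset.sum_congr rfl fun i _ => by ring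
  rw [step]
  calc ‖∑ i ∈ Finset.range n, (q.coeff i - p.coeff i) * x ^ i‖
      ≤ ∑ i ∈ Finset.range n, ‖(q.coeff i - p.coeff i) * x ^ i‖ := norm_sum_le _ _
  _ ≤ ∑ i ∈ Finset.range n, δ * M ^ n := by
      refine Finset.sum_le_sum fun i hi => ?_
      have hi' := Finset.mem_range.1 hi
      have hδ0 : 0 ≤ δ := (norm_nonneg _).trans (hδ i hi')
      rw [norm_mul, norm_pow]
      have h1 : ‖x‖ ^ i ≤ M ^ i := pow_le_pow_left₀ (norm_nonneg _) hx i
      have h2 : M ^ i ≤ M ^ n := pow_le_pow_right₀ hM hi'.le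
      exact mul_le_mul (hδ i hi') (h1.trans h2) (pow_nonneg (norm_nonneg _) _) hδ0
  _ = n * δ * M ^ n := by
      rw [Finset.sum_const, Finset.card_range, nsmul_eq_mul]
      ring

/-- Approximation of a polynomial by a split monic polynomial with coefficients in the
image of a dense embedding of an algebraically closed field. -/
lemma aux_exists_approx {A : Type*} [Field A] [IsAlgClosed A] (phi : A →+* K)
    (hd : DenseRange phi) {n : ℕ} (hn : 0 < n) (c : ℕ → K) {δ : ℝ} (hδ : 0 < δ) :
    ∃ q : K[X], q.Monic ∧ q.natDegree = n ∧ q.Splits ∧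
      ∀ i, i < n → ‖q.coeff i - c i‖ ≤ δ := by
  have hb : ∀ i : Fin n, ∃ b : A, ‖c i - phi b‖ < δ := by
    intro i
    obtain ⟨b, hb⟩ := Metric.denseRange_iff.1 hd (c i) δ hδ
    exact ⟨b, by rwa [dist_eq_norm] at hb⟩
  choose b hb using hb
  set r : A[X] := X ^ n + ∑ i : Fin n, C (b i) * X ^ (i : ℕ) with hr
  have hdeg := degree_sum_fin_lt b
  have hrm : r.Monic := monic_X_pow_add hdeg
  have hrd : r.natDegree = n := by
    have hdeg' : r.degree = n := by
      rw [hr, degree_add_eq_left_of_degree_lt (by rwa [degree_X_pow]), degree_X_pow]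
    exact natDegree_eq_of_degree_eq_some hdeg'
  refine ⟨r.map phi, hrm.map phi, ?_, ?_, ?_⟩
  · rw [(hrm.natDegree_map phi : (r.map phi).natDegree = r.natDegree), hrd]
  · show (r.map phi).Splits
    exact IsAlgClosed.splits_domain r
  · intro i hi
    have hcoeff : r.coeff i = b ⟨i, hi⟩ := by
      rw [hr, coeff_add, coeff_X_pow, if_neg (by omega : i ≠ n), zero_add,
        finset_sum_coeff]
      rw [Finset.sum_eq_single (⟨i, hi⟩ : Fin n)]
      · simp [coeff_C_mul, coeff_X_pow]
      · intro j _ hj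
        rw [coeff_C_mul, coeff_X_pow, if_neg, mul_zero]
        intro h
        apply hj
        exact Fin.ext (by simpa using h.symm)
      · intro h
        exact absurd (Finset.mem_univ _) h
    rw [coeff_map, hcoeff, norm_sub_rev]
    exact (hb ⟨i, hi⟩).le

/-- Main auxiliary result: a complete normed field containing a dense image of an
algebraically closed field is algebraically closed. -/
theorem aux_isAlgClosed_of_denseRange {A K : Type*} [Field A] [IsAlgClosed A] [NormedField K]
    [CompleteSpace K] (phi : A →+* K) (hd : DenseRange phi) : IsAlgClosed K := by
  apply IsAlgClosed.of_exists_root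
  intro p hm hirr
  set n := p.natDegree with hn
  have hn0 : 0 < n := hirr.natDegree_pos
  have hn0' : (1 : ℝ) ≤ n := by exact_mod_cast hn0
  set M : ℝ := 1 + ∑ i ∈ Finset.range n, (‖p.coeff i‖ + 1) with hM
  have hM1 : 1 ≤ M := by
    have h : (0 : ℝ) ≤ ∑ i ∈ Finset.range n, (‖p.coeff i‖ + 1) :=
      Finset.sum_nonneg fun i _ => by positivity
    rw [hM]; linarith
  have hM0 : 0 < M := lt_of_lt_of_le one_pos hM1
  have hMn : (1 : ℝ) ≤ M ^ n := one_le_pow₀ hM1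
  set e : ℕ → ℝ := fun m => (1 / 2 : ℝ) ^ m with he
  have he0 : ∀ m, 0 < e m := fun m => by positivity
  have he1 : ∀ m, e m ≤ 1 := fun m => pow_le_one₀ (by norm_num) (by norm_num)
  have heanti : ∀ m, e (m + 1) ≤ e m := fun m => by
    exact pow_le_pow_of_le_one (by norm_num) (by norm_num) (Nat.le_succ m)
  set δ : ℕ → ℝ := fun m => e m ^ n / (2 * n * M ^ n) with hδdef
  have hden : (0 : ℝ) < 2 * n * M ^ n := by positivity
  have hden1 : (2 : ℝ) ≤ 2 * n * M ^ n := by nlinarith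
  have hδ0 : ∀ m, 0 < δ m := fun m => div_pos (pow_pos (he0 m) n) hden
  have hδ1 : ∀ m, δ m ≤ 1 := by
    intro m
    rw [hδdef]
    rw [div_le_one hden]
    calc e m ^ n ≤ 1 := pow_le_one₀ (he0 m).le (he1 m)
    _ ≤ 2 * n * M ^ n := by linarith
  have hδval : ∀ m, (n : ℝ) * δ m * M ^ n = e m ^ n / 2 := by
    intro m
    rw [hδdef]
    field_simp
  choose q hq1 hq2 hq3 hq4 using fun m =>
    aux_exists_approx phi hd hn0 (fun i => p.coeff i) (hδ0 m)
  -- all roots of all the `q m` are bounded by `M`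
  have hroot_bound : ∀ m z, z ∈ (q m).roots → ‖z‖ ≤ M := by
    intro m z hz
    have h := aux_norm_root_le (hq1 m) (isRoot_of_mem_roots hz)
    rw [hq2 m] at h
    refine h.trans (max_le hM1 ?_)
    have hS : ∀ i ∈ Finset.range n, ‖(q m).coeff i‖ ≤ ‖p.coeff i‖ + 1 := by
      intro i hi
      have h4 := hq4 m i (Finset.mem_range.1 hi)
      have : ‖(q m).coeff i‖ ≤ ‖p.coeff i‖ + ‖(q m).coeff i - p.coeff i‖ := by
        calc ‖(q m).coeff i‖ = ‖p.coeff i + ((q m).coeff i - p.coeff i)‖ := by ring_nf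
        _ ≤ _ := norm_add_le _ _
      linarith [h4.trans (hδ1 m)]
    calc ∑ i ∈ Finset.range n, ‖(q m).coeff i‖
        ≤ ∑ i ∈ Finset.range n, (‖p.coeff i‖ + 1) := Finset.sum_le_sum hS
    _ ≤ M := by rw [hM]; linarith
  -- evaluation of `q m` is close to evaluation of `p` on the ball of radius `M`
  have heval : ∀ m (x : K), ‖x‖ ≤ M → ‖(q m).eval x - p.eval x‖ ≤ e m ^ n / 2 := by
    intro m x hx
    rw [← hδval m]
    refine aux_eval_diff_bound le_rfl (le_of_eq (hq2 m)) ?_ (fun i hi => hq4 m i hi) hM1 hx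
    have h1 : (q m).coeff n = 1 := by
      have := (hq1 m).coeff_natDegree
      rwa [hq2 m] at this
    have h2 : p.coeff n = 1 := hm.coeff_natDegree
    rw [h1, h2]
  -- key step: from a root of `q m` we can find a close root of `q (m+1)`
  have key : ∀ m (x : K), x ∈ (q m).roots → ∃ y, y ∈ (q (m + 1)).roots ∧ ‖x - y‖ ≤ e m := by
    intro m x hx
    have hxM : ‖x‖ ≤ M := hroot_bound m x hx
    have e3 : (q m).eval x = 0 := isRoot_of_mem_roots hx
    have h1 : ‖(q (m + 1)).eval x‖ ≤ e m ^ n := by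
      have e1 := heval (m + 1) x hxM
      have e2 := heval m x hxM
      have hcalc : ‖(q (m + 1)).eval x‖
          = ‖((q (m + 1)).eval x - p.eval x) - ((q m).eval x - p.eval x)‖ := by
        rw [e3]
        ring_nf
      rw [hcalc]
      have h := (norm_sub_le _ _).trans (add_le_add e1 e2)
      have hee : e (m + 1) ^ n ≤ e m ^ n := pow_le_pow_left₀ (he0 (m + 1)).le (heanti m) n
      calc ‖((q (m + 1)).eval x - p.eval x) - ((q m).eval x - p.eval x)‖
          ≤ e (m + 1) ^ n / 2 + e m ^ n / 2 := h
      _ ≤ e m ^ n := by linarith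
    obtain ⟨y, hy, hyn⟩ := aux_exists_close_root (hq1 (m + 1)) (hq3 (m + 1))
      (by rw [hq2 (m + 1)]; exact hn0) x
    refine ⟨y, hy, ?_⟩
    have hpow : ‖x - y‖ ^ n ≤ e m ^ n := by
      have := hyn.trans h1
      rwa [hq2 (m + 1)] at this
    exact (pow_le_pow_iff_left₀ (norm_nonneg _) (he0 m).le hn0.ne').1 hpow
  -- construct the Cauchy sequence of roots
  have hcard0 : (q 0).roots ≠ 0 := by
    have h := ((hq3 0).map (RingHom.id K)).natDegree_eq_card_roots
    rw [Polynomial.map_id, hq2 0] at h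
    intro h0
    rw [h0] at h
    simp at h
    omega
  obtain ⟨z0, hz0⟩ := Multiset.exists_mem_of_ne_zero hcard0
  choose step hstep hstepd using key
  let xs : ∀ m : ℕ, {z : K // z ∈ (q m).roots} := fun m =>
    Nat.rec ⟨z0, hz0⟩ (fun m ih => ⟨step m ih.1 ih.2, hstep m ih.1 ih.2⟩) m
  have hxd : ∀ m, ‖(xs m).1 - (xs (m + 1)).1‖ ≤ e m := fun m =>
    hstepd m (xs m).1 (xs m).2
  have hcauchy : CauchySeq (fun m => (xs m).1) := by
    apply cauchySeq_of_le_geometric (1 / 2 : ℝ) 1 (by norm_num)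
    intro m
    rw [dist_eq_norm, one_mul]
    exact hxd m
  obtain ⟨l, hl⟩ := cauchySeq_tendsto_of_complete hcauchy
  refine ⟨l, ?_⟩
  have hcont : Tendsto (fun m => p.eval ((xs m).1)) atTop (𝓝 (p.eval l)) :=
    ((p.continuous).tendsto l).comp hl
  have hzero : Tendsto (fun m => p.eval ((xs m).1)) atTop (𝓝 0) := by
    apply squeeze_zero_norm (a := fun m => e m)
    · intro m
      have hxM : ‖(xs m).1‖ ≤ M := hroot_bound m _ (xs m).2
      have h0 : (q m).eval (xs m).1 = 0 := isRoot_of_mem_roots (xs m).2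
      have h := heval m (xs m).1 hxM
      rw [h0, zero_sub, norm_neg] at h
      have h1 : e m ^ n ≤ e m := pow_le_of_le_one (he0 m).le (he1 m) hn0.ne'
      calc ‖p.eval (xs m).1‖ ≤ e m ^ n / 2 := h
      _ ≤ e m := by linarith [he0 m]
    · exact tendsto_pow_atTop_nhds_zero_of_lt_one (by norm_num) (by norm_num)
  exact tendsto_nhds_unique hcont hzero

end Aux

/-- Let `k` be a field complete with respect to an absolute value.  The
completion `C = ℂ_k` of an algebraic closure `kac` of `k` (with the unique extension of the
absolute value) is algebraically closed. -/
theorem completion_of_algebraic_closure_isAlgClosed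
    {k kac C : Type*} [Field k] [Field kac] [Field C]
    [Algebra k kac] [IsAlgClosure k kac]
    (ι : kac →+* C) (v : AbsoluteValue C ℝ)
    -- `k` is complete
    (hkcomplete : ∀ f : ℕ → k,
      (∀ ε : ℝ, 0 < ε → ∃ N : ℕ, ∀ m ≥ N, ∀ n ≥ N,
        v (ι (algebraMap k kac (f m - f n))) < ε) →
      ∃ l : k, ∀ ε : ℝ, 0 < ε → ∃ N : ℕ, ∀ n ≥ N,
        v (ι (algebraMap k kac (f n - l))) < ε)
    -- `kac` is dense in `C`
    (hdense : ∀ (y : C) (ε : ℝ), 0 < ε → ∃ x : kac, v (y - ι x) < ε)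
    -- `C` is complete
    (hCcomplete : ∀ f : ℕ → C,
      (∀ ε : ℝ, 0 < ε → ∃ N : ℕ, ∀ m ≥ N, ∀ n ≥ N, v (f m - f n) < ε) →
      ∃ l : C, ∀ ε : ℝ, 0 < ε → ∃ N : ℕ, ∀ n ≥ N, v (f n - l) < ε) :
    IsAlgClosed C := by
  letI : NormedField C := v.toNormedField
  have hdist : ∀ x y : C, dist x y = v (x - y) := fun x y => by rw [dist_eq_norm]; rfl
  haveI : CompleteSpace C := by
    apply Metric.complete_of_cauchySeq_tendsto
    intro u hu
    obtain ⟨l, hl⟩ := hCcomplete u (by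
      intro ε hε
      obtain ⟨N, hN⟩ := Metric.cauchySeq_iff.1 hu ε hε
      exact ⟨N, fun m hm n hn => by rw [← hdist]; exact hN m hm n hn⟩)
    refine ⟨l, Metric.tendsto_atTop.2 fun ε hε => ?_⟩
    obtain ⟨N, hN⟩ := hl ε hε
    exact ⟨N, fun n hn => by rw [hdist]; exact hN n hn⟩
  haveI : IsAlgClosed kac := IsAlgClosure.isAlgClosed k
  have hdr : DenseRange ι := by
    rw [Metric.denseRange_iff]
    intro y ε hε
    obtain ⟨x, hx⟩ := hdense y ε hε
    exact ⟨x, by rw [hdist]; exact hx⟩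
  exact aux_isAlgClosed_of_denseRange ι hdr
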